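/- If X ⊗ Y is an extremal subset of B(λ) ⊗ B(μ) and Y is closed under raising operators (e_i(Y) ⊆ Y ∪ {0} for all i), then X is an extremal subset of B(λ). -/

import Mathlib

/-! Common definitions: abstract normal crystals, tensor products, extremal subsets,
hinges, Demazure crystals, and related Coxeter-theoretic notions. -/

/-- Iterate a partially defined map `k` times. -/
def optIter {B : Type*} (g : B → Option B) : ℕ → B → Option B
  | 0, b => some b
  | k + 1, b => (g b).bind (optIter g k)

/-- The raw data of a crystal: index set `I` (Dynkin nodes), weight lattice `P` with
simple roots `alpha i` and coroot pairings `pair i = ⟨α_i^∨, ·⟩`, and the structure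
maps `wt, ε_i, φ_i, e_i, f_i` (with `none` playing the role of `0`). -/
structure CrystalStruct (I : Type*) (P : Type*) [AddCommGroup P] (B : Type*) where
  alpha : I → P
  pair : I → P →+ ℤ
  wt : B → P
  eps : I → B → ℤ
  phi : I → B → ℤ
  e : I → B → Option B
  f : I → B → Option B

namespace CrystalStruct

variable {I P B B₁ B₂ : Type*} [AddCommGroup P]

/-- The crystal axioms (C1)–(C4) of a (finite, normal) crystal. Axiom (C4) is
expressed by saying `ε_i(b)` (resp. `φ_i(b)`) is the largest `k` with `e_i^k(b)`
(resp. `f_i^k(b)`) defined. -/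
structure IsCrystal (C : CrystalStruct I P B) : Prop where
  C1 : ∀ i b, C.phi i b - C.eps i b = C.pair i (C.wt b)
  wt_e : ∀ i b b', C.e i b = some b' → C.wt b' = C.wt b + C.alpha i
  wt_f : ∀ i b b', C.f i b = some b' → C.wt b' = C.wt b - C.alpha i
  C3 : ∀ i b b', C.e i b = some b' ↔ C.f i b' = some b
  eps_nonneg : ∀ i b, 0 ≤ C.eps i b
  phi_nonneg : ∀ i b, 0 ≤ C.phi i b
  eps_max : ∀ i b, (optIter (C.e i) (C.eps i b).toNat b).isSome ∧
      ∀ k : ℕ, (optIter (C.e i) k b).isSome → (k : ℤ) ≤ C.eps i b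
  phi_max : ∀ i b, (optIter (C.f i) (C.phi i b).toNat b).isSome ∧
      ∀ k : ℕ, (optIter (C.f i) k b).isSome → (k : ℤ) ≤ C.phi i b

/-- The tensor product `B₁ ⊗ B₂` of two crystals, with the standard signature rule. -/
def tensor (C₁ : CrystalStruct I P B₁) (C₂ : CrystalStruct I P B₂) :
    CrystalStruct I P (B₁ × B₂) where
  alpha := C₁.alpha
  pair := C₁.pair
  wt b := C₁.wt b.1 + C₂.wt b.2
  eps i b := max (C₁.eps i b.1) (C₂.eps i b.2 - C₁.pair i (C₁.wt b.1))
  phi i b := max (C₂.phi i b.2) (C₁.phi i b.1 + C₁.pair i (C₂.wt b.2))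
  e i b := if C₂.eps i b.2 ≤ C₁.phi i b.1
      then (C₁.e i b.1).map (fun x => (x, b.2))
      else (C₂.e i b.2).map (fun y => (b.1, y))
  f i b := if C₂.eps i b.2 < C₁.phi i b.1
      then (C₁.f i b.1).map (fun x => (x, b.2))
      else (C₂.f i b.2).map (fun y => (b.1, y))

/-- A subset `X` of a crystal is *extremal* (string property): `X` is nonempty, closed
under all raising operators `e_i`, and whenever `x ∈ X` is not the top of its `i`-string
(i.e. `e_i x` is defined), `X` also contains `f_i x` when defined.  This is the local
reformulation of: every `i`-string meets `X` in `∅`, the whole string, or its top element. -/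
def Extremal (C : CrystalStruct I P B) (X : Set B) : Prop :=
  X.Nonempty ∧ ∀ i, ∀ x ∈ X,
    (∀ x', C.e i x = some x' → x' ∈ X) ∧
    ((C.e i x).isSome → ∀ x', C.f i x = some x' → x' ∈ X)

/-- `x ⊗ y` is an *`i`-hinge*: `ε_i(x) > 0`, `φ_i(x) = 0`, `ε_i(y) = 0`, `φ_i(y) > 0`. -/
def IsHinge (C₁ : CrystalStruct I P B₁) (C₂ : CrystalStruct I P B₂)
    (i : I) (x : B₁) (y : B₂) : Prop :=
  0 < C₁.eps i x ∧ C₁.phi i x = 0 ∧ C₂.eps i y = 0 ∧ 0 < C₂.phi i y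

/-- `F_i X = ⋃_{k ≥ 0} f_i^k X` : close a subset under the lowering operator `f_i`. -/
def fClosure (C : CrystalStruct I P B) (i : I) (X : Set B) : Set B :=
  {b | ∃ x ∈ X, ∃ k, optIter (C.f i) k x = some b}

/-- `demWord C [i₁, …, i_k] X = F_{i₁} F_{i₂} ⋯ F_{i_k} X`. -/
def demWord (C : CrystalStruct I P B) : List I → Set B → Set B
  | [], X => X
  | i :: L, X => C.fClosure i (C.demWord L X)

/-- Apply raising operators along a list of indices. -/
def applyE (C : CrystalStruct I P B) : List I → B → Option B
  | [], b => some b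
  | i :: L, b => (C.e i b).bind (C.applyE L)

/-- `applyFPow C [(i₁,m₁),…,(i_k,m_k)] b = f_{i₁}^{m₁} f_{i₂}^{m₂} ⋯ f_{i_k}^{m_k} (b)`. -/
def applyFPow (C : CrystalStruct I P B) : List (I × ℕ) → B → Option B
  | [], b => some b
  | p :: L, b => (C.applyFPow L b).bind (optIter (C.f p.1) p.2)

/-- A highest weight element: all raising operators vanish. -/
def HighestWeight (C : CrystalStruct I P B) (b : B) : Prop := ∀ i, C.e i b = none

/-- `C` is a highest weight normal crystal with highest weight element `hw`:
it satisfies the crystal axioms, `hw` is highest weight, and `B = F {hw}`. -/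
structure IsHWCrystal (C : CrystalStruct I P B) (hw : B) : Prop where
  crystal : C.IsCrystal
  hw_top : C.HighestWeight hw
  connected : ∀ b, ∃ L : List I, b ∈ C.demWord L {hw}

/-- The connected component `F {b}` of `b` (closure under lowering operators). -/
def component (C : CrystalStruct I P B) (b : B) : Set B :=
  {x | ∃ L : List I, x ∈ C.demWord L {b}}

end CrystalStruct

section Coxeter

open CrystalStruct

variable {I : Type*} {W : Type*} [Group W] {M : CoxeterMatrix I}

/-- Bruhat order via the subword property: `u ⪯ w` iff some reduced word for `w` contains
a reduced word for `u` as a subword. -/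
def Bruhat (cs : CoxeterSystem M W) (u w : W) : Prop :=
  ∃ L L' : List I, cs.IsReduced L ∧ cs.wordProd L = w ∧
    L'.Sublist L ∧ cs.IsReduced L' ∧ cs.wordProd L' = u

variable {P B : Type*} [AddCommGroup P]

/-- The Demazure crystal `B_w = F_w {hw}`, as the union over reduced words for `w`
of the corresponding compositions of string closures. -/
def DemCrystal (cs : CoxeterSystem M W) (C : CrystalStruct I P B) (hw : B) (w : W) :
    Set B :=
  {b | ∃ L : List I, cs.IsReduced L ∧ cs.wordProd L = w ∧ b ∈ C.demWord L {hw}}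

/-- Kashiwara's theorem: `F_w {hw}` is independent of the reduced word for `w`. -/
def DemIndep (cs : CoxeterSystem M W) (C : CrystalStruct I P B) (hw : B) : Prop :=
  ∀ L L' : List I, cs.IsReduced L → cs.IsReduced L' → cs.wordProd L = cs.wordProd L' →
    C.demWord L {hw} = C.demWord L' {hw}

/-- A subset is a *direct sum of Demazure crystals* if it is the union, over a set of
highest weight elements, of Demazure crystals of the corresponding components. -/
def IsDemazureSum (cs : CoxeterSystem M W) (C : CrystalStruct I P B) (Z : Set B) : Prop :=
  ∃ (S : Set B) (wf : B → W), (∀ b ∈ S, C.HighestWeight b) ∧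
    Z = ⋃ b ∈ S, DemCrystal cs C b (wf b)

/-- `v` is the minimal-length representative of the coset `w H`. -/
def IsMinCosetRep (cs : CoxeterSystem M W) (H : Subgroup W) (w v : W) : Prop :=
  w⁻¹ * v ∈ H ∧ ∀ x : W, w⁻¹ * x ∈ H → cs.length v ≤ cs.length x

/-- `v` is the maximal-length representative of the coset `w H`. -/
def IsMaxCosetRep (cs : CoxeterSystem M W) (H : Subgroup W) (w v : W) : Prop :=
  w⁻¹ * v ∈ H ∧ ∀ x : W, w⁻¹ * x ∈ H → cs.length x ≤ cs.length v

/-- The parabolic subgroup `W_σ = ⟨ s_i : s_i σ ≺ σ ⟩` generated by the left descents of `σ`. -/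
def descentSubgroup (cs : CoxeterSystem M W) (σ : W) : Subgroup W :=
  Subgroup.closure {g | ∃ i, g = cs.simple i ∧ cs.length (cs.simple i * σ) < cs.length σ}

/-- The Weyl group acts on the weight lattice by simple reflections:
`s_i • p = p − ⟨α_i^∨, p⟩ α_i`. -/
def ReflectionAction (cs : CoxeterSystem M W) (C : CrystalStruct I P B)
    [MulAction W P] : Prop :=
  ∀ (i : I) (p : P), cs.simple i • p = p - C.pair i p • C.alpha i

end Coxeter

namespace CrystalStruct

variable {I P B : Type*} [AddCommGroup P]

/-- Weight of a pure tensor `b₁ ⊗ ⋯ ⊗ b_m`, encoded as a list. -/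
def listWt (C : CrystalStruct I P B) : List B → P
  | [] => 0
  | b :: l => C.wt b + C.listWt l

/-- `ε_i` on iterated tensors. -/
def listEps (C : CrystalStruct I P B) (i : I) : List B → ℤ
  | [] => 0
  | b :: l => max (C.eps i b) (C.listEps i l - C.pair i (C.wt b))

/-- `φ_i` on iterated tensors. -/
def listPhi (C : CrystalStruct I P B) (i : I) : List B → ℤ
  | [] => 0
  | b :: l => max (C.listPhi i l) (C.phi i b + C.pair i (C.listWt l))

/-- `e_i` on iterated tensors (standard signature rule, iterated associatively). -/
def listE (C : CrystalStruct I P B) (i : I) : List B → Option (List B)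
  | [] => none
  | b :: l => if C.listEps i l ≤ C.phi i b then (C.e i b).map (· :: l)
      else (C.listE i l).map (b :: ·)

/-- `f_i` on iterated tensors. -/
def listF (C : CrystalStruct I P B) (i : I) : List B → Option (List B)
  | [] => none
  | b :: l => if C.listEps i l < C.phi i b then (C.f i b).map (· :: l)
      else (C.listF i l).map (b :: ·)

/-- The iterated tensor power crystal: pure tensors of all finite lengths, the
length-`m` ones forming `B^{⊗ m}`. -/
def tensorPow (C : CrystalStruct I P B) : CrystalStruct I P (List B) where
  alpha := C.alpha
  pair := C.pair
  wt := C.listWt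
  eps := C.listEps
  phi := C.listPhi
  e := C.listE
  f := C.listF

end CrystalStruct


lemma optIter_add' {B : Type*} (g : B → Option B) (m n : ℕ) (b : B) :
    optIter g (m + n) b = (optIter g m b).bind (optIter g n) := by
  induction m generalizing b with
  | zero => simp [optIter]
  | succ k ih =>
      have : k + 1 + n = (k + n) + 1 := by omega
      rw [this]
      show (g b).bind (optIter g (k + n)) = ((g b).bind (optIter g k)).bind (optIter g n)
      rw [Option.bind_assoc]
      exact Option.bind_congr (fun a _ => ih a)

open CrystalStruct in
/-- if `X ⊗ Y` is extremal and `Y` is closed under raising operators,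
then `X` is extremal. -/
theorem stmt8 {I P B₁ B₂ : Type*} [AddCommGroup P]
    (C₁ : CrystalStruct I P B₁) (C₂ : CrystalStruct I P B₂)
    (h₁ : C₁.IsCrystal) (h₂ : C₂.IsCrystal) (hpair : C₂.pair = C₁.pair)
    (X : Set B₁) (Y : Set B₂) (hXne : X.Nonempty) (hYne : Y.Nonempty)
    (hext : (C₁.tensor C₂).Extremal (X ×ˢ Y))
    (hYraise : ∀ (i : I), ∀ y ∈ Y, ∀ y', C₂.e i y = some y' → y' ∈ Y) :
    C₁.Extremal X := by
  refine ⟨hXne, fun i x hx => ?_⟩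
  obtain ⟨y, hy⟩ := hYne
  -- raise y to the top of its i-string
  obtain ⟨hsome, hmax⟩ := h₂.eps_max i y
  obtain ⟨y₀, hy₀⟩ := Option.isSome_iff_exists.mp hsome
  have hYiter : ∀ (k : ℕ) (a : B₂), a ∈ Y → ∀ a', optIter (C₂.e i) k a = some a' → a' ∈ Y := by
    intro k
    induction k with
    | zero =>
        intro a ha a' h
        simp only [optIter, Option.some_inj] at h
        exact h ▸ ha
    | succ n ih =>
        intro a ha a' h
        simp only [optIter, Option.bind_eq_some_iff] at h
        obtain ⟨b, hb, hb'⟩ := h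
        exact ih b (hYraise i a ha b hb) a' hb'
  have hy₀Y : y₀ ∈ Y := hYiter _ y hy y₀ hy₀
  have heps0 : C₂.eps i y₀ = 0 := by
    obtain ⟨hs0, _⟩ := h₂.eps_max i y₀
    have hk : (optIter (C₂.e i) ((C₂.eps i y).toNat + (C₂.eps i y₀).toNat) y).isSome := by
      rw [optIter_add', hy₀]
      exact hs0
    have h1 := hmax _ hk
    have h2 := h₂.eps_nonneg i y
    have h3 := h₂.eps_nonneg i y₀
    omega
  have hcond : C₂.eps i y₀ ≤ C₁.phi i x := heps0 ▸ h₁.phi_nonneg i x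
  have hte : (C₁.tensor C₂).e i (x, y₀) = (C₁.e i x).map (fun a => (a, y₀)) := by
    show (if C₂.eps i y₀ ≤ C₁.phi i x then _ else _) = _
    rw [if_pos hcond]
  obtain ⟨hE, hF⟩ := hext.2 i (x, y₀) ⟨hx, hy₀Y⟩
  constructor
  · intro x' hx'
    have hmem : (x', y₀) ∈ X ×ˢ Y := by
      apply hE
      rw [hte, hx']
      rfl
    exact hmem.1
  · intro hxe x' hx'
    have hphi : 0 < C₁.phi i x := by
      have h1 : (optIter (C₁.f i) 1 x).isSome := by
        simp [optIter, hx']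
      have := (h₁.phi_max i x).2 1 h1
      omega
    have htf : (C₁.tensor C₂).f i (x, y₀) = (C₁.f i x).map (fun a => (a, y₀)) := by
      show (if C₂.eps i y₀ < C₁.phi i x then _ else _) = _
      rw [if_pos (by omega)]
    have hesome : ((C₁.tensor C₂).e i (x, y₀)).isSome := by
      rw [hte]
      rw [Option.isSome_map]
      exact hxe
    have hmem : (x', y₀) ∈ X ×ˢ Y := by
      apply hF hesome
      rw [htf, hx']
      rfl
    exact hmem.1
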